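/- Let G = (V, E) be a finite simple graph and let W ⊆ V be a subset with |W| ≥ 2 and |E(W)| ≥ 2|W| − 2 that is inclusion-minimal with this property, i.e., no proper subset W' ⊊ W with |W'| ≥ 2 satisfies |E(W')| ≥ 2|W'| − 2. Then |W| ≥ 4 and the subgraph G(W) induced by W is 2-connected: G(W) is connected, and for every vertex w ∈ W the subgraph induced by W \ {w} is connected. -/

import Mathlib

open SimpleGraph

private def ES {V : Type*} (G : SimpleGraph V) (S : Set V) : Set (Sym2 V) :=
  {e ∈ G.edgeSet | ∀ v ∈ e, v ∈ S}

private lemma mem_ES {V : Type*} (G : SimpleGraph V) (S : Set V) (x y : V) :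
    s(x, y) ∈ ES G S ↔ G.Adj x y ∧ x ∈ S ∧ y ∈ S := by
  constructor
  · rintro ⟨he, hv⟩
    exact ⟨he, hv x (by simp), hv y (by simp)⟩
  · rintro ⟨h, hx, hy⟩
    refine ⟨h, ?_⟩
    intro v hv; rcases Sym2.mem_iff.1 hv with rfl | rfl <;> assumption

private lemma ES_singleton {V : Type*} (G : SimpleGraph V) (a : V) :
    ES G {a} = ∅ := by
  ext e
  induction e using Sym2.ind with
  | _ x y =>
    simp only [mem_ES, Set.mem_singleton_iff, Set.mem_empty_iff_false, iff_false]
    rintro ⟨hadj, rfl, rfl⟩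
    exact G.ne_of_adj hadj rfl

private lemma ncard_ES_le_add {V : Type*} [Fintype V] [DecidableEq V]
    (G : SimpleGraph V) (S A B : Set V)
    (h : ∀ e ∈ ES G S, e ∈ ES G A ∨ e ∈ ES G B) :
    (ES G S).ncard ≤ (ES G A).ncard + (ES G B).ncard := by
  calc (ES G S).ncard ≤ (ES G A ∪ ES G B).ncard :=
        Set.ncard_le_ncard (fun e he => h e he) (Set.toFinite _)
    _ ≤ (ES G A).ncard + (ES G B).ncard := Set.ncard_union_le _ _

private lemma split_of_not_connected {V : Type*} (G : SimpleGraph V) (S : Set V)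
    (hne : S.Nonempty) (h : ¬ (G.induce S).Connected) :
    ∃ A B : Set V, A.Nonempty ∧ B.Nonempty ∧ A ∪ B = S ∧ Disjoint A B ∧
      ∀ a ∈ A, ∀ b ∈ B, ¬ G.Adj a b := by
  have hS : Nonempty S := hne.to_subtype
  rw [SimpleGraph.connected_iff] at h
  push_neg at h
  have hpre : ¬ (G.induce S).Preconnected := fun hp => (h hp).false (Classical.choice hS)
  rw [SimpleGraph.Preconnected] at hpre
  push_neg at hpre
  obtain ⟨u, v, huv⟩ := hpre
  refine ⟨{x | ∃ hx : x ∈ S, (G.induce S).Reachable u ⟨x, hx⟩},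
    {x | ∃ hx : x ∈ S, ¬ (G.induce S).Reachable u ⟨x, hx⟩}, ⟨u.1, u.2, Reachable.refl u⟩,
    ⟨v.1, v.2, fun hr => huv (by convert hr)⟩, ?_, ?_, ?_⟩
  · apply Set.Subset.antisymm
    · rintro x (⟨hx, -⟩ | ⟨hx, -⟩) <;> exact hx
    · intro x hx
      by_cases hr : (G.induce S).Reachable u ⟨x, hx⟩
      · exact Or.inl ⟨hx, hr⟩
      · exact Or.inr ⟨hx, hr⟩
  · rw [Set.disjoint_left]
    rintro x ⟨hx, hr⟩ ⟨hx', hnr⟩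
    exact hnr hr
  · rintro a ⟨ha, hra⟩ b ⟨hb, hnrb⟩ hadj
    exact hnrb (hra.trans (SimpleGraph.Adj.reachable
      (by exact hadj : (G.induce S).Adj ⟨a, ha⟩ ⟨b, hb⟩)))

/-- An inclusion-minimal vertex set `W` with `|W| ≥ 2` and `|E(W)| ≥ 2|W| - 2` has at
least four vertices and induces a `2`-connected subgraph. -/
theorem minimal_dense_two_connected
    {V : Type*} [Fintype V] [DecidableEq V]
    (G : SimpleGraph V) (W : Set V)
    (hW : 2 ≤ W.ncard)
    (hdense : 2 * W.ncard - 2 ≤ {e ∈ G.edgeSet | ∀ v ∈ e, v ∈ W}.ncard)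
    (hmin : ∀ W' : Set V, W' ⊂ W → 2 ≤ W'.ncard →
      {e ∈ G.edgeSet | ∀ v ∈ e, v ∈ W'}.ncard < 2 * W'.ncard - 2) :
    4 ≤ W.ncard ∧ (G.induce W).Connected ∧
      ∀ w ∈ W, (G.induce (W \ {w})).Connected := by
  have hdense' : 2 * W.ncard - 2 ≤ (ES G W).ncard := hdense
  have hmin' : ∀ W' : Set V, W' ⊂ W → 2 ≤ W'.ncard →
      (ES G W').ncard < 2 * W'.ncard - 2 := hmin
  -- Part 1 : |W| ≥ 4
  have h4 : 4 ≤ W.ncard := by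
    by_contra h4
    push_neg at h4
    interval_cases h : W.ncard
    · -- ncard = 2
      obtain ⟨a, b, hab, rfl⟩ := Set.ncard_eq_two.1 h
      have hsub : ES G {a, b} ⊆ {s(a, b)} := by
        intro e he
        induction e using Sym2.ind with
        | _ x y =>
          obtain ⟨hadj, hx, hy⟩ := (mem_ES G _ x y).1 he
          have hxy := G.ne_of_adj hadj
          rcases hx with rfl | rfl <;> rcases hy with rfl | rfl <;>
            simp_all [Sym2.eq_iff]
      have := Set.ncard_le_ncard hsub (Set.toFinite _)
      rw [Set.ncard_singleton] at this
      omega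
    · -- ncard = 3
      obtain ⟨a, b, c, hab, hac, hbc, rfl⟩ := Set.ncard_eq_three.1 h
      have hsub : ES G {a, b, c} ⊆ {s(a, b), s(a, c), s(b, c)} := by
        intro e he
        induction e using Sym2.ind with
        | _ x y =>
          obtain ⟨hadj, hx, hy⟩ := (mem_ES G _ x y).1 he
          have hxy := G.ne_of_adj hadj
          simp only [Set.mem_insert_iff, Set.mem_singleton_iff] at hx hy ⊢
          rcases hx with rfl | rfl | rfl <;> rcases hy with rfl | rfl | rfl <;>
            simp_all [Sym2.eq_iff]
      have hle := Set.ncard_le_ncard hsub (Set.toFinite _)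
      have h3 : ({s(a, b), s(a, c), s(b, c)} : Set (Sym2 V)).ncard ≤ 3 := by
        calc ({s(a, b), s(a, c), s(b, c)} : Set (Sym2 V)).ncard
            ≤ ({s(a, c), s(b, c)} : Set (Sym2 V)).ncard + 1 :=
              Set.ncard_insert_le _ _
          _ ≤ (({s(b, c)} : Set (Sym2 V)).ncard + 1) + 1 := by
              have := Set.ncard_insert_le s(a, c) ({s(b, c)} : Set (Sym2 V))
              omega
          _ ≤ 3 := by simp [Set.ncard_singleton]
      omega
  -- a reusable bound
  have side_bound : ∀ A : Set V, A ⊂ W → 2 ≤ A.ncard →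
      (ES G A).ncard + 3 ≤ 2 * A.ncard := by
    intro A hAW hA2
    have := hmin' A hAW hA2
    omega
  -- Part 2 : connectivity of W
  have hWconn : (G.induce W).Connected := by
    by_contra hc
    obtain ⟨A, B, hAne, hBne, hABU, hABd, hAB⟩ :=
      split_of_not_connected G W (by
        have : 0 < W.ncard := by omega
        exact Set.nonempty_of_ncard_ne_zero (by omega)) hc
    have hAW : A ⊆ W := hABU ▸ Set.subset_union_left
    have hBW : B ⊆ W := hABU ▸ Set.subset_union_right
    have hcard : A.ncard + B.ncard = W.ncard := by
      rw [← hABU, Set.ncard_union_eq hABd (Set.toFinite _) (Set.toFinite _)]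
    have hApos : 0 < A.ncard := (Set.ncard_pos (Set.toFinite _)).2 hAne
    have hBpos : 0 < B.ncard := (Set.ncard_pos (Set.toFinite _)).2 hBne
    have hApr : A ⊂ W := ⟨hAW, fun hWA => by
      obtain ⟨b, hb⟩ := hBne
      exact (Set.disjoint_right.1 hABd hb) (hWA (hBW hb))⟩
    have hBpr : B ⊂ W := ⟨hBW, fun hWB => by
      obtain ⟨a, ha⟩ := hAne
      exact (Set.disjoint_left.1 hABd ha) (hWB (hAW ha))⟩
    have hsplit : ∀ e ∈ ES G W, e ∈ ES G A ∨ e ∈ ES G B := by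
      intro e he
      induction e using Sym2.ind with
      | _ x y =>
        obtain ⟨hadj, hx, hy⟩ := (mem_ES G _ x y).1 he
        rw [← hABU] at hx hy
        rcases hx with hx | hx <;> rcases hy with hy | hy
        · exact Or.inl ((mem_ES G _ x y).2 ⟨hadj, hx, hy⟩)
        · exact absurd hadj (hAB x hx y hy)
        · exact absurd hadj.symm (hAB y hy x hx)
        · exact Or.inr ((mem_ES G _ x y).2 ⟨hadj, hx, hy⟩)
    have hle := ncard_ES_le_add G W A B hsplit
    rcases eq_or_lt_of_le (Nat.succ_le_of_lt hApos) with hA1 | hA2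
    · obtain ⟨a, ha⟩ := Set.ncard_eq_one.1 hA1.symm
      rw [ha, ES_singleton] at hle
      simp at hle
      have := hmin' B hBpr (by omega)
      omega
    rcases eq_or_lt_of_le (Nat.succ_le_of_lt hBpos) with hB1 | hB2
    · obtain ⟨b, hb⟩ := Set.ncard_eq_one.1 hB1.symm
      rw [hb, ES_singleton] at hle
      simp at hle
      have := hmin' A hApr (by omega)
      omega
    have bA := side_bound A hApr hA2
    have bB := side_bound B hBpr hB2
    omega
  refine ⟨h4, hWconn, ?_⟩
  -- Part 3 : no cut vertex
  intro w hw
  by_contra hc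
  have hScard : (W \ {w}).ncard = W.ncard - 1 :=
    Set.ncard_diff_singleton_of_mem hw
  obtain ⟨A, B, hAne, hBne, hABU, hABd, hAB⟩ :=
    split_of_not_connected G (W \ {w})
      (Set.nonempty_of_ncard_ne_zero (by omega)) hc
  have hAS : A ⊆ W \ {w} := hABU ▸ Set.subset_union_left
  have hBS : B ⊆ W \ {w} := hABU ▸ Set.subset_union_right
  have hwA : w ∉ A := fun h => (hAS h).2 rfl
  have hwB : w ∉ B := fun h => (hBS h).2 rfl
  have hcard : A.ncard + B.ncard = W.ncard - 1 := by
    rw [← hScard, ← hABU, Set.ncard_union_eq hABd (Set.toFinite _) (Set.toFinite _)]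
  have hApos : 0 < A.ncard := (Set.ncard_pos (Set.toFinite _)).2 hAne
  have hBpos : 0 < B.ncard := (Set.ncard_pos (Set.toFinite _)).2 hBne
  set W1 : Set V := insert w A with hW1
  set W2 : Set V := insert w B with hW2
  have hW1card : W1.ncard = A.ncard + 1 := by
    rw [hW1, Set.ncard_insert_of_notMem hwA (Set.toFinite _)]
  have hW2card : W2.ncard = B.ncard + 1 := by
    rw [hW2, Set.ncard_insert_of_notMem hwB (Set.toFinite _)]
  have hW1sub : W1 ⊆ W := by
    rw [hW1]; exact Set.insert_subset hw (hAS.trans Set.diff_subset)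
  have hW2sub : W2 ⊆ W := by
    rw [hW2]; exact Set.insert_subset hw (hBS.trans Set.diff_subset)
  have hW1pr : W1 ⊂ W := by
    refine ⟨hW1sub, fun hWs => ?_⟩
    obtain ⟨b, hb⟩ := hBne
    have hbW : b ∈ W := (hBS hb).1
    rcases hWs hbW with rfl | hbA
    · exact hwB hb
    · exact Set.disjoint_right.1 hABd hb hbA
  have hW2pr : W2 ⊂ W := by
    refine ⟨hW2sub, fun hWs => ?_⟩
    obtain ⟨a, ha⟩ := hAne
    have haW : a ∈ W := (hAS ha).1
    rcases hWs haW with rfl | haB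
    · exact hwA ha
    · exact Set.disjoint_left.1 hABd ha haB
  have hsplit : ∀ e ∈ ES G W, e ∈ ES G W1 ∨ e ∈ ES G W2 := by
    intro e he
    induction e using Sym2.ind with
    | _ x y =>
      obtain ⟨hadj, hx, hy⟩ := (mem_ES G _ x y).1 he
      have hxy := G.ne_of_adj hadj
      by_cases hxw : x = w
      · have hyS : y ∈ W \ {w} :=
          ⟨hy, fun h => hxy (hxw.trans (Set.mem_singleton_iff.1 h).symm)⟩
        rw [← hABU] at hyS
        have hxW1 : x ∈ W1 := by rw [hW1, hxw]; exact Set.mem_insert _ _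
        have hxW2 : x ∈ W2 := by rw [hW2, hxw]; exact Set.mem_insert _ _
        rcases hyS with hyA | hyB
        · exact Or.inl ((mem_ES G _ x y).2 ⟨hadj, hxW1, Set.mem_insert_of_mem _ hyA⟩)
        · exact Or.inr ((mem_ES G _ x y).2 ⟨hadj, hxW2, Set.mem_insert_of_mem _ hyB⟩)
      by_cases hyw : y = w
      · have hxS : x ∈ W \ {w} := ⟨hx, fun h => hxw (Set.mem_singleton_iff.1 h)⟩
        rw [← hABU] at hxS
        have hyW1 : y ∈ W1 := by rw [hW1, hyw]; exact Set.mem_insert _ _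
        have hyW2 : y ∈ W2 := by rw [hW2, hyw]; exact Set.mem_insert _ _
        rcases hxS with hxA | hxB
        · exact Or.inl ((mem_ES G _ x y).2 ⟨hadj, Set.mem_insert_of_mem _ hxA, hyW1⟩)
        · exact Or.inr ((mem_ES G _ x y).2 ⟨hadj, Set.mem_insert_of_mem _ hxB, hyW2⟩)
      have hxS : x ∈ A ∪ B := hABU ▸ ⟨hx, hxw⟩
      have hyS : y ∈ A ∪ B := hABU ▸ ⟨hy, hyw⟩
      rcases hxS with hxA | hxB <;> rcases hyS with hyA | hyB
      · exact Or.inl ((mem_ES G _ x y).2 ⟨hadj, Set.mem_insert_of_mem _ hxA, Set.mem_insert_of_mem _ hyA⟩)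
      · exact absurd hadj (hAB x hxA y hyB)
      · exact absurd hadj.symm (hAB y hyA x hxB)
      · exact Or.inr ((mem_ES G _ x y).2 ⟨hadj, Set.mem_insert_of_mem _ hxB, Set.mem_insert_of_mem _ hyB⟩)
  have hle := ncard_ES_le_add G W W1 W2 hsplit
  have b1 := side_bound W1 hW1pr (by omega)
  have b2 := side_bound W2 hW2pr (by omega)
  omega
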